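/- With the notation of the Gaussian quadratic form inequality (λᵢ, δᵢ, γ, λ_max as above, γ > 0), for every η ≥ 0, P( Σᵢ λᵢ((Zᵢ+δᵢ)² − (1+δᵢ²)) ≥ ηγ ) ≤ e^{1/4}·exp(−η/√8). -/

import Mathlib

open MeasureTheory ProbabilityTheory Finset Real
open scoped ENNReal NNReal

/-- Key elementary inequality: `exp (-(2c+8c²)) ≤ 1 - 2c` for `c ≤ 1/4`. -/
lemma aux_exp_le (c : ℝ) (hc : c ≤ 1/4) :
    Real.exp (-(2*c + 8*c^2)) ≤ 1 - 2*c := by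
  have hA : (0:ℝ) < 1 - 2*c := by linarith
  have hpos : (0:ℝ) < 1 + (2*c + 8*c^2) := by nlinarith [sq_nonneg (4*c+1)]
  have h1 : (1 - 2*c)⁻¹ ≤ 1 + (2*c + 8*c^2) := by
    rw [inv_le_iff_one_le_mul₀ hA]
    nlinarith [sq_nonneg c]
  have h2 : (1 - 2*c)⁻¹ ≤ Real.exp (2*c + 8*c^2) :=
    h1.trans (by linarith [Real.add_one_le_exp (2*c + 8*c^2)])
  rw [Real.exp_neg]
  rw [inv_le_comm₀ (Real.exp_pos _) hA]
  exact h2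

/-- Gaussian mgf-type integral: for `c < 1/2`,
`∫ exp (c (x+d)²) dN(0,1) = (1-2c)^{-1/2} exp (c d² / (1-2c))`, with integrability. -/
lemma gauss_mgf (c d : ℝ) (hc : c < 1/2) :
    Integrable (fun x => Real.exp (c * (x + d)^2)) (gaussianReal 0 1) ∧
    ∫ x, Real.exp (c * (x + d)^2) ∂(gaussianReal 0 1)
      = (Real.sqrt (1 - 2*c))⁻¹ * Real.exp (c * d^2 / (1 - 2*c)) := by
  have hA : (0:ℝ) < 1 - 2*c := by linarith
  set a : ℝ := (1 - 2*c)/2 with ha_def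
  have ha : 0 < a := by simp only [ha_def]; linarith
  set m : ℝ := 2*c*d/(1 - 2*c) with hm_def
  set K : ℝ := c*d^2/(1 - 2*c) with hK_def
  have hpt : ∀ x : ℝ, gaussianPDFReal 0 1 x * Real.exp (c * (x + d)^2)
      = ((Real.sqrt (2*Real.pi))⁻¹ * Real.exp K) * Real.exp (-a * (x - m)^2) := by
    intro x
    rw [gaussianPDFReal]
    simp only [NNReal.coe_one, mul_one, sub_zero]
    rw [mul_assoc, mul_assoc, ← Real.exp_add, ← Real.exp_add]
    congr 1
    congr 1
    rw [hm_def, hK_def, ha_def]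
    field_simp
    ring
  have hint_shift : Integrable (fun x : ℝ => Real.exp (-a * (x - m)^2)) volume :=
    (integrable_exp_neg_mul_sq ha).comp_sub_right m
  have hint : Integrable (fun x => gaussianPDFReal 0 1 x * Real.exp (c * (x + d)^2)) volume := by
    refine (Integrable.congr
      (hint_shift.const_mul ((Real.sqrt (2*Real.pi))⁻¹ * Real.exp K)) ?_)
    filter_upwards with x using (hpt x).symm
  have hmeas : AEMeasurable (fun x : ℝ => (gaussianPDFReal 0 1 x).toNNReal) volume :=
    ((measurable_gaussianPDFReal 0 1).real_toNNReal).aemeasurable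
  have hgr : gaussianReal 0 1
      = volume.withDensity (fun x => ((gaussianPDFReal 0 1 x).toNNReal : ℝ≥0∞)) := by
    rw [gaussianReal_of_var_ne_zero _ one_ne_zero]
    rfl
  have hsmul : ∀ x : ℝ, ((gaussianPDFReal 0 1 x).toNNReal : ℝ) • Real.exp (c * (x + d)^2)
      = gaussianPDFReal 0 1 x * Real.exp (c * (x + d)^2) := by
    intro x
    rw [smul_eq_mul, Real.coe_toNNReal _ (gaussianPDFReal_nonneg 0 1 x)]
  constructor
  · rw [hgr, integrable_withDensity_iff_integrable_smul₀ hmeas]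
    exact hint.congr (by filter_upwards with x using (hsmul x).symm)
  · rw [hgr, integral_withDensity_eq_integral_smul₀ hmeas]
    calc ∫ x, (gaussianPDFReal 0 1 x).toNNReal • Real.exp (c * (x + d)^2)
        = ∫ x, ((Real.sqrt (2*Real.pi))⁻¹ * Real.exp K) * Real.exp (-a * (x - m)^2) := by
          refine integral_congr_ae ?_
          filter_upwards with x
          rw [NNReal.smul_def, hsmul x, hpt x]
      _ = ((Real.sqrt (2*Real.pi))⁻¹ * Real.exp K) * ∫ x, Real.exp (-a * (x - m)^2) := by
          rw [integral_const_mul]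
      _ = ((Real.sqrt (2*Real.pi))⁻¹ * Real.exp K) * Real.sqrt (Real.pi / a) := by
          rw [integral_sub_right_eq_self (fun x => Real.exp (-a * x^2)) m,
            integral_gaussian]
      _ = (Real.sqrt (1 - 2*c))⁻¹ * Real.exp K := by
          rw [show Real.pi / a = (2*Real.pi) / (1 - 2*c) by
            rw [ha_def]; field_simp]
          rw [Real.sqrt_div (by positivity : (0:ℝ) ≤ 2*Real.pi) (1 - 2*c)]
          have h2pi : (0:ℝ) < Real.sqrt (2*Real.pi) := Real.sqrt_pos.mpr (by positivity)
          have hsA : (0:ℝ) < Real.sqrt (1 - 2*c) := Real.sqrt_pos.mpr hA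
          field_simp

/-- Per-coordinate bound on the mgf factor. -/
lemma factor_bound (c d : ℝ) (hc : c ≤ 1/4) :
    Integrable (fun x => Real.exp (c * ((x + d)^2 - (1 + d^2)))) (gaussianReal 0 1) ∧
    ∫ x, Real.exp (c * ((x + d)^2 - (1 + d^2))) ∂(gaussianReal 0 1)
      ≤ Real.exp (4 * c^2 * (1 + 2*d^2)) := by
  have hc' : c < 1/2 := by linarith
  have hA : (0:ℝ) < 1 - 2*c := by linarith
  obtain ⟨hint, hval⟩ := gauss_mgf c d hc'
  have heq : ∀ x : ℝ, Real.exp (c * ((x + d)^2 - (1 + d^2)))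
      = Real.exp (c * (x + d)^2) * Real.exp (-(c * (1 + d^2))) := by
    intro x; rw [← Real.exp_add]; ring_nf
  constructor
  · refine (hint.mul_const (Real.exp (-(c * (1 + d^2))))).congr ?_
    filter_upwards with x using (heq x).symm
  · have h1 : ∫ x, Real.exp (c * ((x + d)^2 - (1 + d^2))) ∂(gaussianReal 0 1)
        = ((Real.sqrt (1 - 2*c))⁻¹ * Real.exp (c * d^2 / (1 - 2*c)))
            * Real.exp (-(c * (1 + d^2))) := by
      rw [← hval, ← integral_mul_const]
      exact integral_congr_ae (by filter_upwards with x using heq x)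
    rw [h1]
    -- bound the sqrt factor
    have hs1 : (Real.sqrt (1 - 2*c))⁻¹ ≤ Real.exp (c + 4*c^2) := by
      have h2 : Real.exp (-(c + 4*c^2)) ≤ Real.sqrt (1 - 2*c) := by
        have h3 : Real.exp (-(c + 4*c^2)) = Real.sqrt (Real.exp (-(2*c + 8*c^2))) := by
          rw [show -(2*c + 8*c^2) = -(c + 4*c^2) + -(c + 4*c^2) by ring, Real.exp_add,
            ← sq, Real.sqrt_sq (Real.exp_pos _).le]
        rw [h3]
        exact Real.sqrt_le_sqrt (aux_exp_le c hc)
      calc (Real.sqrt (1 - 2*c))⁻¹ ≤ (Real.exp (-(c + 4*c^2)))⁻¹ := by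
            apply inv_anti₀ (Real.exp_pos _) h2
        _ = Real.exp (c + 4*c^2) := by rw [← Real.exp_neg, neg_neg]
    have hs2 : Real.exp (c * d^2 / (1 - 2*c)) ≤ Real.exp (c * d^2 + 8*c^2*d^2) := by
      apply Real.exp_le_exp.mpr
      rw [div_le_iff₀ hA]
      nlinarith [sq_nonneg c, sq_nonneg d, sq_nonneg (c*d)]
    calc (Real.sqrt (1 - 2*c))⁻¹ * Real.exp (c * d^2 / (1 - 2*c))
          * Real.exp (-(c * (1 + d^2)))
        ≤ Real.exp (c + 4*c^2) * Real.exp (c * d^2 + 8*c^2*d^2)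
          * Real.exp (-(c * (1 + d^2))) := by
          apply mul_le_mul_of_nonneg_right _ (Real.exp_pos _).le
          exact mul_le_mul hs1 hs2 (Real.exp_pos _).le (Real.exp_pos _).le
      _ = Real.exp (4 * c^2 * (1 + 2*d^2)) := by
          rw [← Real.exp_add, ← Real.exp_add]; congr 1; ring

/-- Exponential inequality for quadratic functions of independent standard
Gaussians (Proposition: exponential chi2, second bound). -/
theorem stmt_4 (n : ℕ) (lam δ : Fin n → ℝ) (γ : ℝ) (hγpos : 0 < γ)
    (hγ : γ ^ 2 = ∑ i, lam i ^ 2 * (2 + 4 * δ i ^ 2))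
    (η : ℝ) (hη : 0 ≤ η) :
    (Measure.pi (fun _ : Fin n => gaussianReal 0 1))
      {x | η * γ ≤ ∑ i, lam i * ((x i + δ i) ^ 2 - (1 + δ i ^ 2))}
      ≤ ENNReal.ofReal (Real.exp (1 / 4) * Real.exp (-(η / Real.sqrt 8))) := by
  letI : MeasureSpace ℝ := ⟨gaussianReal 0 1⟩
  have hs8 : (0:ℝ) < Real.sqrt 8 := Real.sqrt_pos.mpr (by norm_num)
  have hs8sq : Real.sqrt 8 ^ 2 = 8 := Real.sq_sqrt (by norm_num)
  set t : ℝ := (Real.sqrt 8 * γ)⁻¹ with ht_def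
  have ht : 0 < t := by positivity
  set c : Fin n → ℝ := fun i => t * lam i with hc_def
  have hc4 : ∀ i, c i ≤ 1/4 := by
    intro i
    have hterm : 2 * lam i ^ 2 ≤ γ ^ 2 := by
      rw [hγ]
      have h1 : lam i ^ 2 * (2 + 4 * δ i ^ 2) ≤ ∑ j, lam j ^ 2 * (2 + 4 * δ j ^ 2) :=
        Finset.single_le_sum (f := fun j => lam j ^ 2 * (2 + 4 * δ j ^ 2))
          (fun j _ => by positivity) (Finset.mem_univ i)
      nlinarith [sq_nonneg (lam i * δ i)]
    have hcsq : c i ^ 2 ≤ 1/16 := by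
      have h1 : (Real.sqrt 8 * γ) * t = 1 := mul_inv_cancel₀ (by positivity)
      have h2 : lam i ^ 2 = c i ^ 2 * (8 * γ ^ 2) := by
        have h4 : lam i = Real.sqrt 8 * γ * (c i) := by
          show lam i = Real.sqrt 8 * γ * (t * lam i)
          rw [show Real.sqrt 8 * γ * (t * lam i) = (Real.sqrt 8 * γ * t) * lam i by ring,
            h1, one_mul]
        rw [h4]
        linear_combination (γ ^ 2 * (c i) ^ 2) * hs8sq
      nlinarith [mul_pos hγpos hγpos]
    nlinarith [sq_nonneg (c i - 1/4), sq_nonneg (c i + 1/4)]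
  -- the factors
  haveI : SigmaFinite (volume : Measure ℝ) :=
    inferInstanceAs (SigmaFinite (gaussianReal 0 1))
  set f : Fin n → ℝ → ℝ :=
    fun i y => Real.exp (c i * ((y + δ i) ^ 2 - (1 + δ i ^ 2))) with hf_def
  have hfact := fun i => factor_bound (c i) (δ i) (hc4 i)
  have hfint : ∀ i, Integrable (f i) (volume : Measure ℝ) := fun i => (hfact i).1
  -- the big function
  set S : (Fin n → ℝ) → ℝ :=
    fun x => ∑ i, lam i * ((x i + δ i) ^ 2 - (1 + δ i ^ 2)) with hS_def
  set F : (Fin n → ℝ) → ℝ := fun x => Real.exp (t * (S x - η * γ)) with hF_def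
  have hFeq : ∀ x, F x = Real.exp (-(t * (η * γ))) * ∏ i, f i (x i) := by
    intro x
    rw [hF_def, hf_def]
    simp only
    rw [← Real.exp_sum, ← Real.exp_add, hS_def]
    congr 1
    rw [mul_sub, Finset.mul_sum]
    rw [Finset.sum_congr rfl (fun i _ => by
      show t * (lam i * ((x i + δ i) ^ 2 - (1 + δ i ^ 2)))
        = t * lam i * ((x i + δ i) ^ 2 - (1 + δ i ^ 2))
      ring)]
    ring
  have hvol : (Measure.pi (fun _ : Fin n => gaussianReal 0 1))
      = (volume : Measure (Fin n → ℝ)) := rfl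
  have hFint : Integrable F (volume : Measure (Fin n → ℝ)) := by
    have h1 : Integrable (fun x : Fin n → ℝ => ∏ i, f i (x i)) volume :=
      MeasureTheory.Integrable.fintype_prod (𝕜 := ℝ) hfint
    exact (h1.const_mul _).congr (by filter_upwards with x using (hFeq x).symm)
  -- Markov
  have hmarkov : (Measure.pi (fun _ : Fin n => gaussianReal 0 1))
      {x | η * γ ≤ S x} ≤ ∫⁻ x, ENNReal.ofReal (F x) ∂(volume : Measure (Fin n → ℝ)) := by
    rw [hvol]
    have hsub : {x | η * γ ≤ S x} ⊆ {x | 1 ≤ ENNReal.ofReal (F x)} := by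
      intro x hx
      simp only [Set.mem_setOf_eq] at hx ⊢
      rw [← ENNReal.ofReal_one]
      apply ENNReal.ofReal_le_ofReal
      rw [hF_def]
      simp only
      rw [← Real.exp_zero]
      apply Real.exp_le_exp.mpr
      have : 0 ≤ S x - η * γ := by linarith
      positivity
    calc (volume : Measure (Fin n → ℝ)) {x | η * γ ≤ S x}
        ≤ volume {x | 1 ≤ ENNReal.ofReal (F x)} := measure_mono hsub
      _ = 1 * volume {x | 1 ≤ ENNReal.ofReal (F x)} := (one_mul _).symm
      _ ≤ ∫⁻ x, ENNReal.ofReal (F x) ∂volume := by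
          apply mul_meas_ge_le_lintegral₀
          exact ENNReal.measurable_ofReal.comp_aemeasurable
            hFint.aestronglyMeasurable.aemeasurable
  have hlint : ∫⁻ x, ENNReal.ofReal (F x) ∂(volume : Measure (Fin n → ℝ))
      = ENNReal.ofReal (∫ x, F x ∂(volume : Measure (Fin n → ℝ))) := by
    rw [ofReal_integral_eq_lintegral_ofReal hFint
      (by filter_upwards with x using Real.exp_nonneg _)]
  -- value of the integral
  have hIval : ∫ x, F x ∂(volume : Measure (Fin n → ℝ))
      = Real.exp (-(t * (η * γ))) * ∏ i, ∫ y, f i y ∂(volume : Measure ℝ) := by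
    rw [show (fun x : Fin n → ℝ => F x) = fun x => Real.exp (-(t * (η * γ))) * ∏ i, f i (x i)
      from funext hFeq]
    rw [integral_const_mul]
    congr 1
    exact MeasureTheory.integral_fintype_prod_eq_prod (𝕜 := ℝ) (μ := fun _ => (volume : Measure ℝ)) f
  -- bound the product
  have hprod : ∏ i, ∫ y, f i y ∂(volume : Measure ℝ) ≤ Real.exp (1/4) := by
    calc ∏ i, ∫ y, f i y ∂(volume : Measure ℝ)
        ≤ ∏ i, Real.exp (4 * c i ^ 2 * (1 + 2 * δ i ^ 2)) := by
          apply Finset.prod_le_prod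
          · intro i _
            exact integral_nonneg (fun y => Real.exp_nonneg _)
          · intro i _
            exact (hfact i).2
      _ = Real.exp (∑ i, 4 * c i ^ 2 * (1 + 2 * δ i ^ 2)) := (Real.exp_sum _ _).symm
      _ = Real.exp (1/4) := by
          congr 1
          have : ∑ i, 4 * c i ^ 2 * (1 + 2 * δ i ^ 2)
              = 2 * t ^ 2 * ∑ i, lam i ^ 2 * (2 + 4 * δ i ^ 2) := by
            rw [Finset.mul_sum]
            apply Finset.sum_congr rfl
            intro i _
            rw [hc_def]
            ring
          rw [this, ← hγ, ht_def, inv_pow, mul_pow, hs8sq]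
          field_simp
          ring
  have htηγ : t * (η * γ) = η / Real.sqrt 8 := by
    rw [ht_def]
    field_simp
  calc (Measure.pi (fun _ : Fin n => gaussianReal 0 1)) {x | η * γ ≤ S x}
      ≤ ∫⁻ x, ENNReal.ofReal (F x) ∂(volume : Measure (Fin n → ℝ)) := hmarkov
    _ = ENNReal.ofReal (∫ x, F x ∂(volume : Measure (Fin n → ℝ))) := hlint
    _ ≤ ENNReal.ofReal (Real.exp (1 / 4) * Real.exp (-(η / Real.sqrt 8))) := by
        apply ENNReal.ofReal_le_ofReal
        rw [hIval, htηγ, mul_comm (Real.exp (1/4))]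
        apply mul_le_mul_of_nonneg_left hprod (Real.exp_nonneg _)
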